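/- The soft-Dice loss is quasi-affine along line segments in a useful sense: for m ∈ M and c₀, c₁ ∈ M, the function t ↦ SD_m((1−t)c₀ + t c₁) on [0,1] is a Möbius (linear-fractional) function of t, and hence attains its minimum over [0,1] at an endpoint t ∈ {0,1}. Consequently the set of minimizers of SD_m over M contains extreme points of M, i.e., there always exists a binary-valued minimizer of soft-Dice. -/
import Mathlib


open MeasureTheory Filter

noncomputable section

/-- The unit cube `[0,1]^n`. -/
def cube (n : ℕ) : Set (Fin n → ℝ) := Set.univ.pi fun _ => Set.Icc (0:ℝ) 1

/-- The (normalized) Lebesgue measure on the unit cube. -/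
def lam (n : ℕ) : Measure (Fin n → ℝ) := volume.restrict (cube n)

/-- The `L¹`-volume `‖f‖₁ = ∫ f dλ` (for nonnegative `f`). -/
def vol1 (n : ℕ) (f : (Fin n → ℝ) → ℝ) : ℝ := ∫ ω, f ω ∂(lam n)

/-- The Dice score `D_m(s) = 2∫ s·m dλ / (‖s‖₁ + ‖m‖₁)`. -/
def Dice (n : ℕ) (m s : (Fin n → ℝ) → ℝ) : ℝ :=
  2 * (∫ ω, s ω * m ω ∂(lam n)) / (vol1 n s + vol1 n m)

/-- The soft-Dice loss `SD_m(c) = 1 - 2∫ c·m dλ / (‖c‖₁ + ‖m‖₁)`. -/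
def softDice (n : ℕ) (m c : (Fin n → ℝ) → ℝ) : ℝ :=
  1 - 2 * (∫ ω, c ω * m ω ∂(lam n)) / (vol1 n c + vol1 n m)

/-- Membership in `M`: measurable with values in `[0,1]`. -/
def MemM (n : ℕ) (m : (Fin n → ℝ) → ℝ) : Prop :=
  Measurable m ∧ ∀ ω, m ω ∈ Set.Icc (0:ℝ) 1

/-- Membership in `S`: measurable with values in `{0,1}`. -/
def MemS (n : ℕ) (s : (Fin n → ℝ) → ℝ) : Prop :=
  Measurable s ∧ ∀ ω, s ω = 0 ∨ s ω = 1

/-- The set of soft-Dice values over `M`. -/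
def SDvals (n : ℕ) (m : (Fin n → ℝ) → ℝ) : Set ℝ :=
  {x : ℝ | ∃ c, MemM n c ∧ x = softDice n m c}

/-- The set of Dice values over `S`. -/
def Dvals (n : ℕ) (m : (Fin n → ℝ) → ℝ) : Set ℝ :=
  {x : ℝ | ∃ s, MemS n s ∧ x = Dice n m s}

/-! ### Auxiliary lemmas -/

instance lam_prob (n : ℕ) : IsProbabilityMeasure (lam n) := by
  constructor
  rw [lam, Measure.restrict_apply_univ, cube, volume_pi_pi]
  simp [Real.volume_Icc]

lemma int_bdd {n : ℕ} {f : (Fin n → ℝ) → ℝ} (C : ℝ) (hf : Measurable f)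
    (hb : ∀ ω, |f ω| ≤ C) : Integrable f (lam n) := by
  refine Integrable.mono' (integrable_const C) hf.aestronglyMeasurable ?_
  exact Filter.Eventually.of_forall fun ω => by simpa using hb ω

lemma MemM.abs_le {n : ℕ} {f : (Fin n → ℝ) → ℝ} (hf : MemM n f) (ω) : |f ω| ≤ 1 :=
  _root_.abs_le.2 ⟨by linarith [(hf.2 ω).1], (hf.2 ω).2⟩

lemma MemM.int {n : ℕ} {f : (Fin n → ℝ) → ℝ} (hf : MemM n f) : Integrable f (lam n) :=
  int_bdd 1 hf.1 hf.abs_le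

lemma MemM.int_mul {n : ℕ} {f g : (Fin n → ℝ) → ℝ} (hf : MemM n f) (hg : MemM n g) :
    Integrable (fun ω => f ω * g ω) (lam n) := by
  refine int_bdd 1 (hf.1.mul hg.1) fun ω => ?_
  rw [abs_mul]
  calc |f ω| * |g ω| ≤ 1 * 1 :=
        mul_le_mul (hf.abs_le ω) (hg.abs_le ω) (abs_nonneg _) zero_le_one
    _ = 1 := by ring

lemma MemM.vol1_nonneg {n : ℕ} {f : (Fin n → ℝ) → ℝ} (hf : MemM n f) : 0 ≤ vol1 n f :=
  integral_nonneg fun ω => (hf.2 ω).1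

lemma int_max {n : ℕ} {m : (Fin n → ℝ) → ℝ} (hm : MemM n m) (r : ℝ) :
    Integrable (fun ω => max (2 * m ω - r) 0) (lam n) := by
  refine int_bdd (2 + |r|) (((measurable_const.mul hm.1).sub measurable_const).max
    measurable_const) fun ω => ?_
  rw [abs_of_nonneg (le_max_right _ _)]
  refine max_le (by nlinarith [(hm.2 ω).2, neg_abs_le r, abs_nonneg r]) (by positivity)

lemma exists_threshold {n : ℕ} {m : (Fin n → ℝ) → ℝ} (hm : MemM n m)
    (hM : 0 < vol1 n m) :
    ∃ r : ℝ, (∫ ω, max (2 * m ω - r) 0 ∂(lam n)) = r * vol1 n m := by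
  set F : ℝ → ℝ := fun r => ∫ ω, max (2 * m ω - r) 0 ∂(lam n) with hF
  have hLip : LipschitzWith 1 F := by
    refine LipschitzWith.of_dist_le_mul fun a b => ?_
    rw [Real.dist_eq, Real.dist_eq, NNReal.coe_one, one_mul]
    have h1 : F a - F b = ∫ ω, (max (2 * m ω - a) 0 - max (2 * m ω - b) 0) ∂(lam n) :=
      (integral_sub (int_max hm a) (int_max hm b)).symm
    rw [h1]
    have habs : |∫ ω, (max (2 * m ω - a) 0 - max (2 * m ω - b) 0) ∂(lam n)|
        ≤ ∫ ω, |max (2 * m ω - a) 0 - max (2 * m ω - b) 0| ∂(lam n) := by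
      simpa [Real.norm_eq_abs] using
        norm_integral_le_integral_norm (μ := lam n)
          (fun ω => max (2 * m ω - a) 0 - max (2 * m ω - b) 0)
    calc |∫ ω, (max (2 * m ω - a) 0 - max (2 * m ω - b) 0) ∂(lam n)|
        ≤ ∫ ω, |max (2 * m ω - a) 0 - max (2 * m ω - b) 0| ∂(lam n) := habs
      _ ≤ ∫ _ω, |a - b| ∂(lam n) := by
          refine integral_mono ((int_max hm a).sub (int_max hm b)).abs (integrable_const _)
            fun ω => ?_
          calc |max (2 * m ω - a) 0 - max (2 * m ω - b) 0| ≤ |(2 * m ω - a) - (2 * m ω - b)| :=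
              abs_max_sub_max_le_abs _ _ _
            _ = |a - b| := by rw [abs_sub_comm]; ring_nf
      _ = |a - b| := by simp
  have hcont : Continuous fun r => F r - r * vol1 n m :=
    hLip.continuous.sub (continuous_id.mul continuous_const)
  have hg0 : F 0 - 0 * vol1 n m = 2 * vol1 n m := by
    have e : (fun ω => max (2 * m ω - 0) 0) = fun ω => 2 * m ω :=
      funext fun ω => by rw [sub_zero]; exact max_eq_left (by linarith [(hm.2 ω).1])
    rw [hF]; simp only [e, integral_const_mul]; unfold vol1; ring
  have hg2 : F 2 - 2 * vol1 n m = -(2 * vol1 n m) := by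
    have e : (fun ω => max (2 * m ω - 2) 0) = fun _ω => (0:ℝ) :=
      funext fun ω => max_eq_right (by linarith [(hm.2 ω).2])
    rw [hF]; simp only [e, integral_zero]; ring
  have := intermediate_value_Icc' (by norm_num : (0:ℝ) ≤ 2) hcont.continuousOn
  have h0mem : (0:ℝ) ∈ Set.Icc (F 2 - 2 * vol1 n m) (F 0 - 0 * vol1 n m) := by
    rw [hg0, hg2]; constructor <;> linarith
  obtain ⟨r, _, hr⟩ := this h0mem
  exact ⟨r, by linarith [hr, sub_eq_zero.1 (hr : F r - r * vol1 n m = 0)]⟩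

lemma binary_min {n : ℕ} {m : (Fin n → ℝ) → ℝ} (hm : MemM n m) (hM : 0 < vol1 n m) :
    ∃ c : (Fin n → ℝ) → ℝ, MemS n c ∧ softDice n m c = sInf (SDvals n m) := by
  obtain ⟨r, hr⟩ := exists_threshold hm hM
  set c : (Fin n → ℝ) → ℝ := fun ω => if r < 2 * m ω then 1 else 0 with hc
  have hcS : MemS n c := by
    constructor
    · exact Measurable.ite (measurableSet_lt measurable_const (measurable_const.mul hm.1))
        measurable_const measurable_const
    · intro ω; by_cases h : r < 2 * m ω <;> simp [hc, h]
  have hcM : MemM n c := by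
    refine ⟨hcS.1, fun ω => ?_⟩
    rcases hcS.2 ω with h | h <;> rw [h] <;> constructor <;> norm_num
  have expand : ∀ f : (Fin n → ℝ) → ℝ, MemM n f →
      (∫ ω, f ω * (2 * m ω - r) ∂(lam n))
        = 2 * (∫ ω, f ω * m ω ∂(lam n)) - r * vol1 n f := by
    intro f hf
    have e : (fun ω => f ω * (2 * m ω - r)) = fun ω => 2 * (f ω * m ω) - r * f ω :=
      funext fun ω => by ring
    rw [e, integral_sub ((hf.int_mul hm).const_mul 2) (hf.int.const_mul r),
      integral_const_mul, integral_const_mul]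
    rfl
  have hub : ∀ f : (Fin n → ℝ) → ℝ, MemM n f →
      2 * (∫ ω, f ω * m ω ∂(lam n)) ≤ r * (vol1 n f + vol1 n m) := by
    intro f hf
    have hle : (∫ ω, f ω * (2 * m ω - r) ∂(lam n))
        ≤ ∫ ω, max (2 * m ω - r) 0 ∂(lam n) := by
      refine integral_mono (int_bdd (2 + |r|) (hf.1.mul ((measurable_const.mul hm.1).sub
        measurable_const)) fun ω => ?_) (int_max hm r) fun ω => ?_
      · rw [abs_mul]
        have h1 : |2 * m ω - r| ≤ 2 + |r| := by
          have := hm.abs_le ω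
          calc |2 * m ω - r| ≤ |2 * m ω| + |r| := abs_sub _ _
            _ ≤ 2 + |r| := by rw [abs_mul]; simp; nlinarith [hm.abs_le ω]
        nlinarith [hf.abs_le ω, abs_nonneg (2 * m ω - r), abs_nonneg (f ω)]
      · rcases le_or_gt 0 (2 * m ω - r) with h | h
        · calc f ω * (2 * m ω - r) ≤ 1 * (2 * m ω - r) :=
              mul_le_mul_of_nonneg_right (hf.2 ω).2 h
            _ ≤ max (2 * m ω - r) 0 := by rw [one_mul]; exact le_max_left _ _
        · calc f ω * (2 * m ω - r) ≤ 0 := mul_nonpos_of_nonneg_of_nonpos (hf.2 ω).1 h.le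
            _ ≤ max (2 * m ω - r) 0 := le_max_right _ _
    rw [expand f hf, hr] at hle
    linarith
  have heq : 2 * (∫ ω, c ω * m ω ∂(lam n)) = r * (vol1 n c + vol1 n m) := by
    have e : (fun ω => c ω * (2 * m ω - r)) = fun ω => max (2 * m ω - r) 0 := by
      funext ω
      by_cases h : r < 2 * m ω
      · rw [hc]; simp only [if_pos h, one_mul]
        exact (max_eq_left (by linarith)).symm
      · rw [hc]; simp only [if_neg h, zero_mul]
        exact (max_eq_right (by push_neg at h; linarith)).symm
    have := expand c hcM
    rw [e, hr] at this
    linarith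
  have hden : ∀ f : (Fin n → ℝ) → ℝ, MemM n f → 0 < vol1 n f + vol1 n m := fun f hf => by
    linarith [hf.vol1_nonneg]
  have hSDlb : ∀ f : (Fin n → ℝ) → ℝ, MemM n f → 1 - r ≤ softDice n m f := by
    intro f hf
    have h2 := hub f hf
    have hd := hden f hf
    rw [softDice]
    have : 2 * (∫ ω, f ω * m ω ∂(lam n)) / (vol1 n f + vol1 n m) ≤ r :=
      (div_le_iff₀ hd).2 (by linarith)
    linarith
  have hSDc : softDice n m c = 1 - r := by
    rw [softDice, heq, mul_div_assoc, div_self (hden c hcM).ne', mul_one]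
  have hmem : (1 - r) ∈ SDvals n m := ⟨c, hcM, hSDc.symm⟩
  have hlb : ∀ x ∈ SDvals n m, 1 - r ≤ x := by
    rintro x ⟨f, hf, rfl⟩
    exact hSDlb f hf
  have hinf : sInf (SDvals n m) = 1 - r :=
    le_antisymm (csInf_le ⟨1 - r, hlb⟩ hmem) (le_csInf ⟨1 - r, hmem⟩ hlb)
  exact ⟨c, hcS, by rw [hSDc, hinf]⟩

theorem soft_dice_mobius_along_segments_and_binary_minimizer
    (n : ℕ) (m c₀ c₁ : (Fin n → ℝ) → ℝ)
    (hm : MemM n m) (h0 : MemM n c₀) (h1 : MemM n c₁) :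
    (∃ α β γ δ : ℝ, ∀ t ∈ Set.Icc (0:ℝ) 1,
        softDice n m (fun ω => (1 - t) * c₀ ω + t * c₁ ω) =
          1 - (α + β * t) / (γ + δ * t)) ∧
    (∀ t ∈ Set.Icc (0:ℝ) 1,
        min (softDice n m c₀) (softDice n m c₁) ≤
          softDice n m (fun ω => (1 - t) * c₀ ω + t * c₁ ω)) ∧
    (∃ c : (Fin n → ℝ) → ℝ, MemS n c ∧
        softDice n m c = sInf (SDvals n m)) := by
  have hnum : ∀ t : ℝ, (∫ ω, ((1 - t) * c₀ ω + t * c₁ ω) * m ω ∂(lam n))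
      = (1 - t) * (∫ ω, c₀ ω * m ω ∂(lam n)) + t * (∫ ω, c₁ ω * m ω ∂(lam n)) := by
    intro t
    have e : (fun ω => ((1 - t) * c₀ ω + t * c₁ ω) * m ω)
        = fun ω => (1 - t) * (c₀ ω * m ω) + t * (c₁ ω * m ω) := funext fun ω => by ring
    rw [e, integral_add ((h0.int_mul hm).const_mul _) ((h1.int_mul hm).const_mul _),
      integral_const_mul, integral_const_mul]
  have hdenv : ∀ t : ℝ, vol1 n (fun ω => (1 - t) * c₀ ω + t * c₁ ω)
      = (1 - t) * vol1 n c₀ + t * vol1 n c₁ := by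
    intro t
    unfold vol1
    rw [integral_add (h0.int.const_mul _) (h1.int.const_mul _),
      integral_const_mul, integral_const_mul]
  refine ⟨⟨2 * (∫ ω, c₀ ω * m ω ∂(lam n)),
      2 * (∫ ω, c₁ ω * m ω ∂(lam n)) - 2 * (∫ ω, c₀ ω * m ω ∂(lam n)),
      vol1 n c₀ + vol1 n m, vol1 n c₁ - vol1 n c₀, fun t _ => ?_⟩, ?_, ?_⟩
  · simp only [softDice]
    rw [hnum t, hdenv t]
    ring_nf
  · -- endpoint minimum
    intro t ht
    rcases (eq_or_lt_of_le hm.vol1_nonneg) with hM | hM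
    · -- degenerate case: m = 0 a.e.
      have hm0 : m =ᵐ[lam n] 0 := by
        have := (integral_eq_zero_iff_of_nonneg (fun ω => (hm.2 ω).1) hm.int).1 hM.symm
        exact this
      have hSD1 : ∀ f : (Fin n → ℝ) → ℝ, softDice n m f = 1 := by
        intro f
        have hz : (∫ ω, f ω * m ω ∂(lam n)) = 0 := by
          refine integral_eq_zero_of_ae ?_
          filter_upwards [hm0] with ω h
          simp only [Pi.zero_apply] at h
          simp [h]
        simp [softDice, hz]
      rw [hSD1, hSD1, hSD1]
      norm_num
    · obtain ⟨ht0, ht1⟩ := ht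
      simp only [softDice]
      rw [hnum t, hdenv t]
      set I0 := ∫ ω, c₀ ω * m ω ∂(lam n) with hI0
      set I1 := ∫ ω, c₁ ω * m ω ∂(lam n) with hI1
      set V0 := vol1 n c₀ with hV0d
      set V1 := vol1 n c₁ with hV1d
      set Mv := vol1 n m with hMv
      have hV0 : 0 ≤ V0 := h0.vol1_nonneg
      have hV1 : 0 ≤ V1 := h1.vol1_nonneg
      have hd0 : 0 < V0 + Mv := by linarith
      have hd1 : 0 < V1 + Mv := by linarith
      have hdt : 0 < (1 - t) * V0 + t * V1 + Mv := by
        have h1' := mul_nonneg (by linarith : (0:ℝ) ≤ 1 - t) hV0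
        have h2' := mul_nonneg ht0 hV1
        linarith
      set f0 := 2 * I0 / (V0 + Mv) with hf0
      set f1 := 2 * I1 / (V1 + Mv) with hf1
      have e0 : 2 * I0 = f0 * (V0 + Mv) := (div_mul_cancel₀ _ hd0.ne').symm
      have e1 : 2 * I1 = f1 * (V1 + Mv) := (div_mul_cancel₀ _ hd1.ne').symm
      have key : 2 * ((1 - t) * I0 + t * I1)
          ≤ max f0 f1 * ((1 - t) * V0 + t * V1 + Mv) := by
        calc 2 * ((1 - t) * I0 + t * I1)
            = (1 - t) * (f0 * (V0 + Mv)) + t * (f1 * (V1 + Mv)) := by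
              rw [← e0, ← e1]; ring
          _ ≤ (1 - t) * (max f0 f1 * (V0 + Mv)) + t * (max f0 f1 * (V1 + Mv)) := by
              refine add_le_add ?_ ?_
              · exact mul_le_mul_of_nonneg_left
                  (mul_le_mul_of_nonneg_right (le_max_left _ _) hd0.le) (by linarith)
              · exact mul_le_mul_of_nonneg_left
                  (mul_le_mul_of_nonneg_right (le_max_right _ _) hd1.le) ht0
          _ = max f0 f1 * ((1 - t) * V0 + t * V1 + Mv) := by ring
      have hft : 2 * ((1 - t) * I0 + t * I1) / ((1 - t) * V0 + t * V1 + Mv)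
          ≤ max f0 f1 := (div_le_iff₀ hdt).2 key
      have hminmax : min (1 - f0) (1 - f1) = 1 - max f0 f1 := by
        rcases le_total f0 f1 with h | h
        · rw [max_eq_right h, min_eq_right (by linarith)]
        · rw [max_eq_left h, min_eq_left (by linarith)]
      rw [hminmax]
      linarith
  · -- binary minimizer
    rcases (eq_or_lt_of_le hm.vol1_nonneg) with hM | hM
    · have hm0 : m =ᵐ[lam n] 0 :=
        (integral_eq_zero_iff_of_nonneg (fun ω => (hm.2 ω).1) hm.int).1 hM.symm
      have hSD1 : ∀ f : (Fin n → ℝ) → ℝ, softDice n m f = 1 := by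
        intro f
        have hz : (∫ ω, f ω * m ω ∂(lam n)) = 0 := by
          refine integral_eq_zero_of_ae ?_
          filter_upwards [hm0] with ω h
          simp only [Pi.zero_apply] at h
          simp [h]
        simp [softDice, hz]
      refine ⟨fun _ => 0, ⟨measurable_const, fun ω => Or.inl rfl⟩, ?_⟩
      have hset : SDvals n m = {1} := by
        ext x
        simp only [SDvals, Set.mem_setOf_eq, Set.mem_singleton_iff]
        constructor
        · rintro ⟨f, hf, rfl⟩; exact hSD1 f
        · intro hx
          exact ⟨fun _ => 0, ⟨measurable_const, fun ω => ⟨le_refl 0, zero_le_one⟩⟩,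
            by rw [hx, hSD1]⟩
      rw [hset, csInf_singleton, hSD1]
    · exact binary_min hm hM
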